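/- Let S be an assignment with maximum machine load at most C, where each job j is assigned to S_j with f_j(S_j) = q_j / r_j(S_j) for a matroid rank function r_j and quota q_j > 0, and where without loss of generality S_j is independent in the matroid 𝓕_j (so r_j(S_j) = |S_j|). Define t_j := ⌈q_j / C⌉. If t_j ≥ 2, then f_j(S_j) ≥ (C/2)·(t_j/|S_j|), and consequently for any machine i, ∑_{j : t_j ≥ 2, i ∈ S_j} t_j / |S_j| ≤ 2. -/

import Mathlib

/-- For matroid-rank processing speeds with S_j independent (so r_j(S_j) = |S_j| and
f_j(S_j) = q_j/|S_j|), with t_j = ⌈q_j/C⌉: jobs with t_j ≥ 2 satisfy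
f_j(S_j) ≥ (C/2)·(t_j/|S_j|), and hence ∑_{j : t_j ≥ 2, i ∈ S_j} t_j/|S_j| ≤ 2. -/
theorem stmt15 {J M : Type*} [Fintype J] [Fintype M] [DecidableEq M]
    (C : ℝ) (hC : 0 < C)
    (q : J → ℝ) (hq : ∀ j, 0 < q j)
    (S : J → Finset M) (hSne : ∀ j, (S j).Nonempty)
    (hload : ∀ i : M,
      ∑ j ∈ Finset.univ.filter (fun j => i ∈ S j), q j / ((S j).card : ℝ) ≤ C) :
    (∀ j : J, 2 ≤ ⌈q j / C⌉ →
      (C / 2) * ((⌈q j / C⌉ : ℝ) / ((S j).card : ℝ)) ≤ q j / ((S j).card : ℝ)) ∧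
    (∀ i : M,
      ∑ j ∈ Finset.univ.filter (fun j => 2 ≤ ⌈q j / C⌉ ∧ i ∈ S j),
        (⌈q j / C⌉ : ℝ) / ((S j).card : ℝ) ≤ 2) := by
  have key : ∀ j : J, 2 ≤ ⌈q j / C⌉ →
      (C / 2) * ((⌈q j / C⌉ : ℝ) / ((S j).card : ℝ)) ≤ q j / ((S j).card : ℝ) := by
    intro j hj
    have hcard : (0 : ℝ) < ((S j).card : ℝ) := by
      exact_mod_cast (hSne j).card_pos
    rw [mul_div_assoc']
    gcongr
    -- C/2 * t ≤ q
    have h1 : (⌈q j / C⌉ : ℝ) < q j / C + 1 := Int.ceil_lt_add_one _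
    have h2 : (⌈q j / C⌉ : ℝ) / 2 ≤ (⌈q j / C⌉ : ℝ) - 1 := by
      have : (2 : ℝ) ≤ (⌈q j / C⌉ : ℝ) := by exact_mod_cast hj
      linarith
    have h3 : (⌈q j / C⌉ : ℝ) / 2 < q j / C := by linarith
    have := (div_lt_div_iff₀ (by norm_num) hC).mp h3
    nlinarith
  refine ⟨key, fun i => ?_⟩
  have step1 : ∑ j ∈ Finset.univ.filter (fun j => 2 ≤ ⌈q j / C⌉ ∧ i ∈ S j),
      (⌈q j / C⌉ : ℝ) / ((S j).card : ℝ)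
      ≤ ∑ j ∈ Finset.univ.filter (fun j => 2 ≤ ⌈q j / C⌉ ∧ i ∈ S j),
      (2 / C) * (q j / ((S j).card : ℝ)) := by
    apply Finset.sum_le_sum
    intro j hjm
    simp only [Finset.mem_filter] at hjm
    have := key j hjm.2.1
    have hC2 : (0 : ℝ) < C / 2 := by linarith
    calc (⌈q j / C⌉ : ℝ) / ((S j).card : ℝ)
        = (2 / C) * ((C / 2) * ((⌈q j / C⌉ : ℝ) / ((S j).card : ℝ))) := by
          field_simp
      _ ≤ (2 / C) * (q j / ((S j).card : ℝ)) := by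
          exact mul_le_mul_of_nonneg_left this (div_nonneg (by norm_num) hC.le)
  refine step1.trans ?_
  rw [← Finset.mul_sum]
  have step2 : ∑ j ∈ Finset.univ.filter (fun j => 2 ≤ ⌈q j / C⌉ ∧ i ∈ S j),
      q j / ((S j).card : ℝ)
      ≤ ∑ j ∈ Finset.univ.filter (fun j => i ∈ S j), q j / ((S j).card : ℝ) := by
    apply Finset.sum_le_sum_of_subset_of_nonneg
    · intro j hj
      simp only [Finset.mem_filter] at *
      exact ⟨hj.1, hj.2.2⟩
    · intro j _ _
      have hcard : (0 : ℝ) < ((S j).card : ℝ) := by exact_mod_cast (hSne j).card_pos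
      exact div_nonneg (hq j).le hcard.le
  calc (2 / C) * ∑ j ∈ Finset.univ.filter (fun j => 2 ≤ ⌈q j / C⌉ ∧ i ∈ S j),
        q j / ((S j).card : ℝ)
      ≤ (2 / C) * C := by
        apply mul_le_mul_of_nonneg_left (step2.trans (hload i))
        exact div_nonneg (by norm_num) hC.le
    _ = 2 := by field_simp
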